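/- arXiv:1911.12281 — 2 statements merged into one kernel-verified Lean document; each statement's English description precedes it below -/
import Mathlib

section
/- Let r ≥ 1 be an integer and let σ : t^R(r) → t^R(r) be the Lie algebra homomorphism determined by σ(t_{ij}) = t_{ij} for 2 ≤ i, j ≤ r, σ(t_{1i}) = σ(t_{i1}) = − Σ_{k=1}^r t_{ki} for 2 ≤ i ≤ r, and σ(t_{11}) = Σ_{k=1}^r Σ_{l=1}^r t_{kl}. Then σ ∘ σ = id; in particular σ is a Lie algebra automorphism of t^R(r). -/
/-- The set of defining relations of the ribbon braid Drinfeld–Kohno Lie algebra `t^R(r)`: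
symmetry `t_{ij} - t_{ji}`, commutation `[t_{ij}, t_{kl}]` for `{i,j} ∩ {k,l} = ∅`, and
`[t_{ij}, t_{ki} + t_{kj}]`. -/
def tRRel (r : ℕ) : Set (FreeLieAlgebra ℚ (Fin r × Fin r)) :=
  { x | (∃ i j : Fin r, x = FreeLieAlgebra.of ℚ (i, j) - FreeLieAlgebra.of ℚ (j, i)) ∨
        (∃ i j k l : Fin r, ({i, j} : Set (Fin r)) ∩ {k, l} = ∅ ∧
          x = ⁅FreeLieAlgebra.of ℚ (i, j), FreeLieAlgebra.of ℚ (k, l)⁆) ∨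
        (∃ i j k : Fin r,
          x = ⁅FreeLieAlgebra.of ℚ (i, j),
                FreeLieAlgebra.of ℚ (k, i) + FreeLieAlgebra.of ℚ (k, j)⁆) }

/-- The Lie ideal generated by the defining relations. -/
noncomputable def tRIdeal (r : ℕ) : LieIdeal ℚ (FreeLieAlgebra ℚ (Fin r × Fin r)) :=
  LieSubmodule.lieSpan ℚ (FreeLieAlgebra ℚ (Fin r × Fin r)) (tRRel r)

/-- The ribbon braid Drinfeld–Kohno Lie algebra `t^R(r)`. -/
abbrev tR (r : ℕ) :=
  FreeLieAlgebra ℚ (Fin r × Fin r) ⧸ tRIdeal r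

/-- The generator `t_{ij}` of `t^R(r)`. -/
noncomputable def tGen (r : ℕ) (i j : Fin r) : tR r :=
  LieSubmodule.Quotient.mk (N := tRIdeal r) (FreeLieAlgebra.of ℚ (i, j))

/-- The quotient map as a Lie algebra homomorphism. -/
noncomputable def tRMk (r : ℕ) : FreeLieAlgebra ℚ (Fin r × Fin r) →ₗ⁅ℚ⁆ tR r :=
  { (tRIdeal r).toSubmodule.mkQ with
    toFun := LieSubmodule.Quotient.mk (N := tRIdeal r)
    map_lie' := rfl }

lemma tGen_symm (r : ℕ) (i j : Fin r) : tGen r i j = tGen r j i := by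
  rw [← sub_eq_zero]
  have h : tGen r i j - tGen r j i =
      LieSubmodule.Quotient.mk (N := tRIdeal r)
        (FreeLieAlgebra.of ℚ (i, j) - FreeLieAlgebra.of ℚ (j, i)) := rfl
  rw [h, LieSubmodule.Quotient.mk_eq_zero']
  exact LieSubmodule.subset_lieSpan (Or.inl ⟨i, j, rfl⟩)

/-- If `σ : t^R(r) → t^R(r)` is the Lie algebra homomorphism determined by
`σ(t_{ij}) = t_{ij}` for `i, j ≥ 2`, `σ(t_{1i}) = σ(t_{i1}) = -Σ_k t_{ki}` for `i ≥ 2`,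
and `σ(t_{11}) = Σ_k Σ_l t_{kl}`, then `σ ∘ σ = id`; in particular `σ` is a Lie algebra
automorphism of `t^R(r)`.  (The index `1` is represented by `⟨0, hr⟩ : Fin r`.) -/
theorem cyclic_structure_map_involutive (r : ℕ) (hr : 1 ≤ r) (σ : tR r →ₗ⁅ℚ⁆ tR r)
    (h1 : ∀ i j : Fin r, i ≠ ⟨0, hr⟩ → j ≠ ⟨0, hr⟩ → σ (tGen r i j) = tGen r i j)
    (h2 : ∀ i : Fin r, i ≠ ⟨0, hr⟩ →
      σ (tGen r ⟨0, hr⟩ i) = -∑ k : Fin r, tGen r k i ∧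
      σ (tGen r i ⟨0, hr⟩) = -∑ k : Fin r, tGen r k i)
    (h3 : σ (tGen r ⟨0, hr⟩ ⟨0, hr⟩) = ∑ k : Fin r, ∑ l : Fin r, tGen r k l) :
    (∀ x : tR r, σ (σ x) = x) ∧ Function.Bijective σ := by
  set z : Fin r := ⟨0, hr⟩ with hz
  have sum_split : ∀ (f : Fin r → tR r),
      ∑ k, f k = f z + ∑ k ∈ Finset.univ.erase z, f k := fun f =>
    (Finset.add_sum_erase _ f (Finset.mem_univ z)).symm
  have hσsum : ∀ (s : Finset (Fin r)) (f : Fin r → tR r),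
      σ (∑ i ∈ s, f i) = ∑ i ∈ s, σ (f i) := fun s f => map_sum σ.toLinearMap f s
  have A : ∀ j : Fin r, j ≠ z → ∑ k, σ (tGen r k j) = - tGen r z j := by
    intro j hj
    rw [sum_split (fun k => σ (tGen r k j)), (h2 j hj).1,
      Finset.sum_congr rfl (fun k hk => h1 k j (Finset.mem_erase.mp hk).1 hj),
      sum_split (fun k => tGen r k j)]
    abel
  have key : ∀ i j : Fin r, σ (σ (tGen r i j)) = tGen r i j := by
    intro i j
    by_cases hi : i = z <;> by_cases hj : j = z
    · subst hi; subst hj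
      rw [h3]
      simp only [hσsum]
      rw [Finset.sum_comm]
      rw [sum_split (fun l => ∑ k, σ (tGen r k l))]
      rw [Finset.sum_congr rfl (fun l hl => A l (Finset.mem_erase.mp hl).1)]
      have gz : ∑ k, σ (tGen r k z) = ∑ m, tGen r m z := by
        rw [sum_split (fun k => σ (tGen r k z)), h3,
          Finset.sum_congr rfl (fun k hk => (h2 k (Finset.mem_erase.mp hk).1).2)]
        have e1 : ∑ k ∈ Finset.univ.erase z, -∑ m, tGen r m k
            = -∑ k ∈ Finset.univ.erase z, ∑ m, tGen r m k := by
          rw [Finset.sum_neg_distrib]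
        have e2 : ∑ k : Fin r, ∑ l : Fin r, tGen r k l
            = ∑ m, tGen r m z + ∑ k ∈ Finset.univ.erase z, ∑ m, tGen r m k := by
          rw [Finset.sum_comm, sum_split (fun l => ∑ m, tGen r m l)]
        rw [e1, e2]
        abel
      rw [gz]
      have e3 : ∑ m, tGen r m z = tGen r z z + ∑ m ∈ Finset.univ.erase z, tGen r z m := by
        rw [sum_split (fun m => tGen r m z)]
        exact congrArg _ (Finset.sum_congr rfl fun m _ => tGen_symm r m z)
      rw [e3, Finset.sum_neg_distrib]
      abel
    · subst hi
      rw [(h2 j hj).1, map_neg, hσsum, A j hj, neg_neg]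
    · subst hj
      rw [(h2 i hi).2, map_neg, hσsum, A i hi, neg_neg]
      exact (tGen_symm r i z).symm
    · rw [h1 i j hi hj, h1 i j hi hj]
  have main : ∀ x : tR r, σ (σ x) = x := by
    have hcomp : (σ.comp σ).comp (tRMk r) = tRMk r :=
      FreeLieAlgebra.hom_ext fun p => key p.1 p.2
    intro x
    obtain ⟨y, rfl⟩ := LieSubmodule.Quotient.surjective_mk' (tRIdeal r) x
    exact LieHom.congr_fun hcomp y
  exact ⟨main, Function.Involutive.bijective main⟩
end

section
/- Fix r ≥ 1 and let J ⊆ ΛV be the two-sided ideal generated by all Arnold elements A_{ijk} (i, j, k pairwise distinct) and all elements B_{ij} (i ≠ j). Then the induced algebra endomorphism ΛI maps J into J, and ΛI ∘ ΛI = id on ΛV. Consequently ΛI descends to a well-defined involutive algebra automorphism of the quotient algebra BV^c_C(r) := ΛV / J. -/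
/-- Index type for the basis of `V`: vectors `u_i`, `ω_{ij}` (for `i < j`), and `θ_i`. -/
inductive BVIdx (r : ℕ) : Type
  | u : Fin r → BVIdx r
  | om : (i j : Fin r) → i < j → BVIdx r
  | th : Fin r → BVIdx r

/-- The ℚ-vector space `V` with basis `u_i`, `ω_{ij}` (`i < j`), `θ_i`. -/
abbrev BVSpace (r : ℕ) : Type := BVIdx r →₀ ℚ

/-- The basis vector `u_i`. -/
noncomputable def uVec (r : ℕ) (i : Fin r) : BVSpace r := Finsupp.single (BVIdx.u i) 1

/-- The vector `ω_{ij} = ω_{ji}` (defined for `i ≠ j`; set to `0` when `i = j`). -/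
noncomputable def omVec (r : ℕ) (i j : Fin r) : BVSpace r :=
  if h : i < j then Finsupp.single (BVIdx.om i j h) 1
  else if h' : j < i then Finsupp.single (BVIdx.om j i h') 1
  else 0

/-- The basis vector `θ_i`. -/
noncomputable def thVec (r : ℕ) (i : Fin r) : BVSpace r := Finsupp.single (BVIdx.th i) 1

/-- The linear involution `I : V → V`, with `I(u_i) = -u_i`,
`I(ω_{ij}) = ω_{ij} - u_i - u_j` and `I(θ_i) = θ_i - 2u_i`. -/
noncomputable def IMap (r : ℕ) : BVSpace r →ₗ[ℚ] BVSpace r :=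
  Finsupp.lift (BVSpace r) ℚ (BVIdx r) fun b =>
    match b with
    | .u i => -uVec r i
    | .om i j _ => omVec r i j - uVec r i - uVec r j
    | .th i => thVec r i - 2 • uVec r i

/-- The exterior algebra `ΛV`. -/
abbrev BVExt (r : ℕ) : Type := ExteriorAlgebra ℚ (BVSpace r)

/-- The element `u_i ∈ ΛV`. -/
noncomputable def uE (r : ℕ) (i : Fin r) : BVExt r := ExteriorAlgebra.ι ℚ (uVec r i)

/-- The element `ω_{ij} ∈ ΛV`. -/
noncomputable def omE (r : ℕ) (i j : Fin r) : BVExt r := ExteriorAlgebra.ι ℚ (omVec r i j)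

/-- The element `θ_i ∈ ΛV`. -/
noncomputable def thE (r : ℕ) (i : Fin r) : BVExt r := ExteriorAlgebra.ι ℚ (thVec r i)

/-- The induced algebra endomorphism `ΛI : ΛV → ΛV`. -/
noncomputable def extI (r : ℕ) : BVExt r →ₐ[ℚ] BVExt r := ExteriorAlgebra.map (IMap r)

/-- The Arnold element `A_{ijk} = ω_{ij}ω_{jk} + ω_{jk}ω_{ki} + ω_{ki}ω_{ij}`. -/
noncomputable def ArnoldA (r : ℕ) (i j k : Fin r) : BVExt r :=
  omE r i j * omE r j k + omE r j k * omE r k i + omE r k i * omE r i j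

/-- The element `B_{ij} = u_i ω_{ij} + ω_{ij} u_j + u_j u_i`. -/
noncomputable def RelB (r : ℕ) (i j : Fin r) : BVExt r :=
  uE r i * omE r i j + omE r i j * uE r j + uE r j * uE r i

/-- The two-sided ideal `J ⊆ ΛV` generated by all Arnold elements `A_{ijk}` (for pairwise
distinct `i, j, k`) and all elements `B_{ij}` (for `i ≠ j`). -/
noncomputable def Jideal (r : ℕ) : TwoSidedIdeal (BVExt r) :=
  TwoSidedIdeal.span
    { x | (∃ i j k : Fin r, i ≠ j ∧ j ≠ k ∧ i ≠ k ∧ x = ArnoldA r i j k) ∨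
          (∃ i j : Fin r, i ≠ j ∧ x = RelB r i j) }

lemma omVec_symm (r : ℕ) (i j : Fin r) : omVec r j i = omVec r i j := by
  rcases lt_trichotomy i j with h | h | h
  · simp [omVec, h, asymm h]
  · subst h; rfl
  · simp [omVec, h, asymm h]

lemma IMap_u (r : ℕ) (i : Fin r) : IMap r (uVec r i) = -uVec r i := by
  simp [IMap, uVec, Finsupp.lift_apply, Finsupp.sum_single_index]

lemma IMap_omS (r : ℕ) (i j : Fin r) (h : i < j) :
    IMap r (Finsupp.single (BVIdx.om i j h) 1) = omVec r i j - uVec r i - uVec r j := by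
  simp [IMap, Finsupp.lift_apply, Finsupp.sum_single_index]

lemma IMap_thS (r : ℕ) (i : Fin r) :
    IMap r (thVec r i) = thVec r i - 2 • uVec r i := by
  simp [IMap, thVec, Finsupp.lift_apply, Finsupp.sum_single_index]

lemma IMap_om (r : ℕ) (i j : Fin r) (h : i ≠ j) :
    IMap r (omVec r i j) = omVec r i j - uVec r i - uVec r j := by
  rcases lt_or_gt_of_ne h with hlt | hgt
  · conv_lhs => rw [show omVec r i j = Finsupp.single (BVIdx.om i j hlt) 1 by simp [omVec, hlt]]
    exact IMap_omS r i j hlt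
  · conv_lhs =>
      rw [show omVec r i j = Finsupp.single (BVIdx.om j i hgt) 1 by simp [omVec, hgt, asymm hgt]]
    rw [IMap_omS r j i hgt, omVec_symm]
    abel

lemma IMap_invol (r : ℕ) (x : BVSpace r) : IMap r (IMap r x) = x := by
  have key : ∀ b : BVIdx r, IMap r (IMap r (Finsupp.single b 1)) = Finsupp.single b 1 := by
    rintro (i | ⟨i, j, h⟩ | i)
    · rw [show (Finsupp.single (BVIdx.u i) 1 : BVSpace r) = uVec r i from rfl,
        IMap_u, map_neg, IMap_u, neg_neg]
    · rw [IMap_omS r i j h]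
      simp only [map_sub, IMap_u, IMap_om r i j h.ne]
      rw [show omVec r i j = Finsupp.single (BVIdx.om i j h) 1 by simp [omVec, h]]
      abel
    · rw [show (Finsupp.single (BVIdx.th i) 1 : BVSpace r) = thVec r i from rfl,
        IMap_thS, map_sub, map_nsmul, IMap_u, IMap_thS]
      abel
  have : (IMap r) ∘ₗ (IMap r) = LinearMap.id := by
    apply Finsupp.lhom_ext
    intro b q
    have : (Finsupp.single b q : BVSpace r) = q • Finsupp.single b 1 := by simp
    simp only [this, LinearMap.comp_apply, map_smul, key, LinearMap.id_apply]
  exact DFunLike.congr_fun this x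

lemma extI_u (r : ℕ) (i : Fin r) : extI r (uE r i) = -uE r i := by
  rw [extI, uE, ExteriorAlgebra.map_apply_ι, IMap_u, map_neg]

lemma extI_om (r : ℕ) (i j : Fin r) (h : i ≠ j) :
    extI r (omE r i j) = omE r i j - uE r i - uE r j := by
  rw [extI, omE, ExteriorAlgebra.map_apply_ι, IMap_om r i j h, map_sub, map_sub]
  rfl

lemma extI_invol (r : ℕ) (x : BVExt r) : extI r (extI r x) = x := by
  have : (extI r).comp (extI r) = AlgHom.id ℚ (BVExt r) := by
    apply ExteriorAlgebra.hom_ext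
    apply LinearMap.ext
    intro v
    simp [extI, ExteriorAlgebra.map_apply_ι, IMap_invol]
  exact DFunLike.congr_fun this x

section generic
variable {M : Type*} [AddCommGroup M] [Module ℚ M]
local notation "ι" => ExteriorAlgebra.ι ℚ

lemma swapE (v w : M) : ι v * ι w = -(ι w * ι v) :=
  eq_neg_of_add_eq_zero_left (ExteriorAlgebra.ι_add_mul_swap v w)

lemma arnold_identity (a b c x y z : M) :
    (ι a - ι x - ι y) * (ι b - ι y - ι z)
  + (ι b - ι y - ι z) * (ι c - ι z - ι x)
  + (ι c - ι z - ι x) * (ι a - ι x - ι y)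
  = (ι a * ι b + ι b * ι c + ι c * ι a)
  - (ι x * ι a + ι a * ι y + ι y * ι x)
  - (ι y * ι b + ι b * ι z + ι z * ι y)
  - (ι z * ι c + ι c * ι x + ι x * ι z) := by
  simp only [sub_mul, mul_sub]
  simp only [swapE b a, swapE c a, swapE c b, swapE x a, swapE x b, swapE x c,
    swapE y a, swapE y b, swapE y c, swapE z a, swapE z b, swapE z c,
    swapE y x, swapE z x, swapE z y, ExteriorAlgebra.ι_sq_zero,
    neg_neg, sub_neg_eq_add, neg_sub]
  abel

lemma relB_identity (a x y : M) :
    (-ι x) * (ι a - ι x - ι y) + (ι a - ι x - ι y) * (-ι y) + (-ι y) * (-ι x)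
      = -(ι x * ι a + ι a * ι y + ι y * ι x) := by
  simp only [sub_mul, mul_sub, neg_mul, mul_neg]
  simp only [swapE y x, ExteriorAlgebra.ι_sq_zero, neg_neg, sub_neg_eq_add, neg_sub]
  abel

end generic

lemma extI_arnold (r : ℕ) (i j k : Fin r) (hij : i ≠ j) (hjk : j ≠ k) (hik : i ≠ k) :
    extI r (ArnoldA r i j k)
      = ArnoldA r i j k - RelB r i j - RelB r j k - RelB r k i := by
  simp only [ArnoldA, RelB, map_add, map_mul, extI_om r i j hij, extI_om r j k hjk,
    extI_om r k i hik.symm]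
  exact arnold_identity _ _ _ _ _ _

lemma extI_relB (r : ℕ) (i j : Fin r) (h : i ≠ j) :
    extI r (RelB r i j) = -(RelB r i j) := by
  simp only [RelB, map_add, map_mul, extI_u, extI_om r i j h]
  exact relB_identity _ _ _

lemma arnold_mem (r : ℕ) (i j k : Fin r) (hij : i ≠ j) (hjk : j ≠ k) (hik : i ≠ k) :
    ArnoldA r i j k ∈ Jideal r :=
  TwoSidedIdeal.subset_span (Or.inl ⟨i, j, k, hij, hjk, hik, rfl⟩)

lemma relB_mem (r : ℕ) (i j : Fin r) (h : i ≠ j) : RelB r i j ∈ Jideal r :=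
  TwoSidedIdeal.subset_span (Or.inr ⟨i, j, h, rfl⟩)

lemma extI_maps_J (r : ℕ) : ∀ x ∈ Jideal r, extI r x ∈ Jideal r := by
  intro x hx
  have := TwoSidedIdeal.mem_span_iff.mp hx
    ((Jideal r).comap ((extI r : BVExt r →ₐ[ℚ] BVExt r) : BVExt r →+* BVExt r))
  rw [TwoSidedIdeal.mem_comap] at this
  apply this
  rintro _ (⟨i, j, k, hij, hjk, hik, rfl⟩ | ⟨i, j, h, rfl⟩) <;>
    rw [SetLike.mem_coe, TwoSidedIdeal.mem_comap]
  · show extI r (ArnoldA r i j k) ∈ Jideal r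
    rw [extI_arnold r i j k hij hjk hik]
    exact sub_mem (sub_mem (sub_mem (arnold_mem r i j k hij hjk hik)
      (relB_mem r i j hij)) (relB_mem r j k hjk)) (relB_mem r k i hik.symm)
  · show extI r (RelB r i j) ∈ Jideal r
    rw [extI_relB r i j h]
    exact neg_mem (relB_mem r i j h)


/-- `ΛI` maps `J` into `J` and satisfies `ΛI ∘ ΛI = id`; consequently it descends to a
well-defined involutive algebra automorphism of the quotient algebra `BV^c_C(r) = ΛV / J`. -/
theorem extI_descends (r : ℕ) (hr : 1 ≤ r) :
    (∀ x ∈ Jideal r, extI r x ∈ Jideal r) ∧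
    (∀ x : BVExt r, extI r (extI r x) = x) ∧
    ∃ φ : (Jideal r).ringCon.Quotient ≃ₐ[ℚ] (Jideal r).ringCon.Quotient,
      (∀ x : BVExt r,
        φ ((Jideal r).ringCon.toQuotient x) = (Jideal r).ringCon.toQuotient (extI r x)) ∧
      ∀ y : (Jideal r).ringCon.Quotient, φ (φ y) = y := by
  refine ⟨extI_maps_J r, extI_invol r, ?_⟩
  set c := (Jideal r).ringCon with hc
  have hresp : ∀ x y : BVExt r, c x y → c (extI r x) (extI r y) := by
    intro x y hxy
    rw [TwoSidedIdeal.rel_iff] at hxy ⊢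
    rw [← map_sub]
    exact extI_maps_J r _ hxy
  let f : c.Quotient → c.Quotient :=
    Quotient.map' (extI r) hresp
  have hf : ∀ x : BVExt r, f (c.toQuotient x) = c.toQuotient (extI r x) := fun x => rfl
  have hff : ∀ y : c.Quotient, f (f y) = y := by
    intro y
    induction y using Quotient.inductionOn' with
    | h x => show f (f (c.toQuotient x)) = _; rw [hf, hf, extI_invol]; rfl
  refine ⟨{ toFun := f, invFun := f, left_inv := hff, right_inv := hff,
            map_mul' := ?_, map_add' := ?_, commutes' := ?_ }, hf, hff⟩
  · intro a b
    induction a using Quotient.inductionOn' with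
    | h x =>
      induction b using Quotient.inductionOn' with
      | h y =>
        show f (c.toQuotient x * c.toQuotient y) = f (c.toQuotient x) * f (c.toQuotient y)
        rw [← RingCon.coe_mul, hf, hf, hf, map_mul, RingCon.coe_mul]
  · intro a b
    induction a using Quotient.inductionOn' with
    | h x =>
      induction b using Quotient.inductionOn' with
      | h y =>
        show f (c.toQuotient x + c.toQuotient y) = f (c.toQuotient x) + f (c.toQuotient y)
        rw [← RingCon.coe_add, hf, hf, hf, map_add, RingCon.coe_add]
  · intro q
    show f (algebraMap ℚ c.Quotient q) = algebraMap ℚ c.Quotient q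
    rw [show (algebraMap ℚ c.Quotient q) = c.toQuotient (algebraMap ℚ (BVExt r) q) from rfl,
      hf, AlgHom.commutes]
end
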